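/- Assume the Markov chain with transition kernel P is m-recurrent for some nonzero σ-finite measure m. Then the stationary measure is unique up to a constant multiplier: if μ₁ and μ₂ are nonzero σ-finite stationary measures for P, then there is a constant c > 0 with μ₁ = c·μ₂. -/

import Mathlib

open MeasureTheory ProbabilityTheory
open scoped ENNReal NNReal

noncomputable section

/-- The hitting time `T_A = inf {n ≥ 1 : ω n ∈ A}`, with value `⊤ : ℕ∞` if no such `n` exists. -/
def hitTime {S : Type*} (A : Set S) (ω : ℕ → S) : ℕ∞ :=
  sInf ((fun k : ℕ => (k : ℕ∞)) '' {k : ℕ | 1 ≤ k ∧ ω k ∈ A})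

/-- `IsMarkovPath K μ₀ L` says that `L` is the law on path space `ℕ → E` of the
time-homogeneous Markov chain with transition kernel `K` and initial distribution `μ₀`
(the measure produced by the Ionescu–Tulcea construction), characterized through its
finite-dimensional distributions. -/
def IsMarkovPath {E : Type*} [MeasurableSpace E] (K : Kernel E E) (μ₀ : Measure E)
    (L : Measure (ℕ → E)) : Prop :=
  IsProbabilityMeasure L ∧
    L.map (fun ω => ω 0) = μ₀ ∧
    ∀ n : ℕ,
      L.map (fun ω => fun i : Fin (n + 2) => ω (i : ℕ)) =
        (L.map (fun ω => fun i : Fin (n + 1) => ω (i : ℕ))).bind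
          (fun v => (K (v (Fin.last n))).map (Fin.snoc v))


namespace HarrisAux

variable {S : Type*} [MeasurableSpace S]

/-- Iterated kernel: `Pit P n x` is the law of `X_n` for the chain started at `x`. -/
def Pit (P : Kernel S S) : ℕ → Kernel S S
  | 0 => Kernel.id
  | n + 1 => P ∘ₖ Pit P n

instance (P : Kernel S S) [IsMarkovKernel P] (n : ℕ) : IsMarkovKernel (Pit P n) := by
  induction n with
  | zero => exact inferInstanceAs (IsMarkovKernel (Kernel.id))
  | succ n ih => exact inferInstanceAs (IsMarkovKernel (P ∘ₖ Pit P n))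

lemma Pit_succ (P : Kernel S S) (n : ℕ) (x : S) :
    Pit P (n + 1) x = (Pit P n x).bind ⇑P := Kernel.comp_apply _ _ _

lemma bind_id (μ : Measure S) : μ.bind ⇑(Kernel.id : Kernel S S) = μ := by
  have : ⇑(Kernel.id : Kernel S S) = fun x => Measure.dirac x := by
    funext x; exact Kernel.id_apply x
  rw [this]
  exact Measure.bind_dirac

lemma Pit_succ' (P : Kernel S S) [IsMarkovKernel P] (n : ℕ) (x : S) :
    Pit P (n + 1) x = (P x).bind ⇑(Pit P n) := by
  induction n generalizing x with
  | zero =>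
    rw [Pit_succ]
    show ((Pit P 0) x).bind ⇑P = _
    have h0 : (Pit P 0) x = Measure.dirac x := Kernel.id_apply x
    rw [h0, Measure.dirac_bind (Kernel.measurable P)]
    have : (P x).bind ⇑(Pit P 0) = (P x).bind ⇑(Kernel.id : Kernel S S) := rfl
    rw [this, bind_id]
  | succ n ih =>
    rw [Pit_succ, ih, Measure.bind_bind (Kernel.measurable _).aemeasurable (Kernel.measurable _).aemeasurable]
    exact congrArg _ (funext fun y => (Pit_succ P n y).symm)

lemma Pit_add (P : Kernel S S) [IsMarkovKernel P] (a b : ℕ) (x : S) :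
    Pit P (a + b) x = (Pit P b x).bind ⇑(Pit P a) := by
  induction a with
  | zero => rw [Nat.zero_add]; exact (bind_id (Pit P b x)).symm
  | succ a ih =>
    have : a + 1 + b = (a + b) + 1 := by omega
    rw [this, Pit_succ, ih, Measure.bind_bind (Kernel.measurable _).aemeasurable (Kernel.measurable _).aemeasurable]
    exact congrArg _ (funext fun y => (Pit_succ P a y).symm)

lemma measurable_snoc_right (n : ℕ) (v : Fin (n + 1) → S) :
    Measurable (fun y : S => (Fin.snoc v y : Fin (n + 1 + 1) → S)) := by
  apply measurable_pi_lambda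
  intro i
  refine Fin.lastCases ?_ ?_ i
  · simp only [Fin.snoc_last]; exact measurable_id
  · intro j; simp only [Fin.snoc_castSucc]; exact measurable_const

lemma measurable_snocfun (n : ℕ) :
    Measurable (fun p : (Fin (n + 1) → S) × S => (Fin.snoc p.1 p.2 : Fin (n + 1 + 1) → S)) := by
  apply measurable_pi_lambda
  intro i
  refine Fin.lastCases ?_ ?_ i
  · simp only [Fin.snoc_last]; exact measurable_snd
  · intro j; simp only [Fin.snoc_castSucc]; exact measurable_fst.eval

lemma measurable_lam (P : Kernel S S) [IsMarkovKernel P] (n : ℕ) :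
    Measurable (fun v : Fin (n + 1) → S =>
      ((P (v (Fin.last n))).map (Fin.snoc v) : Measure (Fin (n + 1 + 1) → S))) := by
  apply Measure.measurable_of_measurable_coe
  intro B hB
  have key : ∀ v : Fin (n + 1) → S, ((P (v (Fin.last n))).map (Fin.snoc v)) B
      = (P.comap (fun v : Fin (n + 1) → S => v (Fin.last n)) (measurable_pi_apply _)) v
          (Prod.mk v ⁻¹' {p : (Fin (n + 1) → S) × S | (Fin.snoc p.1 p.2 : Fin (n+1+1) → S) ∈ B}) := by
    intro v
    rw [Measure.map_apply (measurable_snoc_right n v) hB, Kernel.comap_apply]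
    rfl
  simp_rw [key]
  exact Kernel.measurable_kernel_prodMk_left ((measurable_snocfun n) hB)

lemma measurable_Plast (P : Kernel S S) [IsMarkovKernel P] (n : ℕ) :
    Measurable (fun v : Fin (n + 1) → S => P (v (Fin.last n))) :=
  (Kernel.measurable P).comp (measurable_pi_apply _)

lemma marginal (P : Kernel S S) [IsMarkovKernel P] {x : S} {L : Measure (ℕ → S)}
    (hL : IsMarkovPath P (Measure.dirac x) L) (n : ℕ) :
    L.map (fun ω => ω n) = Pit P n x := by
  obtain ⟨hprob, h0, hstep⟩ := hL
  have mpre : ∀ k : ℕ, Measurable (fun ω : ℕ → S => fun i : Fin (k + 1) => ω (i : ℕ)) :=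
    fun k => measurable_pi_lambda _ fun i => measurable_pi_apply _
  have claimA : ∀ k : ℕ, L.map (fun ω => ω k)
      = (L.map (fun ω => fun i : Fin (k + 1) => ω (i : ℕ))).map
          (fun v => v (Fin.last k)) := by
    intro k
    rw [Measure.map_map (measurable_pi_apply _) (mpre k)]
    rfl
  induction n with
  | zero =>
    rw [h0]
    exact (Kernel.id_apply x).symm
  | succ n ih =>
    have hQ : L.map (fun ω => fun i : Fin (n + 1 + 1) => ω (i : ℕ))
        = (L.map (fun ω => fun i : Fin (n + 1) => ω (i : ℕ))).bind
            (fun v => (P (v (Fin.last n))).map (Fin.snoc v)) := hstep n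
    rw [claimA (n + 1), hQ]
    have hmapbind : ((L.map (fun ω => fun i : Fin (n + 1) => ω (i : ℕ))).bind
          (fun v => (P (v (Fin.last n))).map (Fin.snoc v))).map
            (fun v : Fin (n + 1 + 1) → S => v (Fin.last (n + 1)))
        = (L.map (fun ω => fun i : Fin (n + 1) => ω (i : ℕ))).bind
            (fun v => P (v (Fin.last n))) := by
      ext B hB
      rw [Measure.map_apply (measurable_pi_apply _) hB,
        Measure.bind_apply ((measurable_pi_apply (Fin.last (n + 1))) hB) (measurable_lam P n).aemeasurable,
        Measure.bind_apply hB (measurable_Plast P n).aemeasurable]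
      apply lintegral_congr
      intro v
      rw [Measure.map_apply (measurable_snoc_right n v)
        ((measurable_pi_apply (Fin.last (n + 1))) hB)]
      congr 1
      ext y
      simp [Fin.snoc_last]
    rw [hmapbind]
    have hbindmap : (L.map (fun ω => fun i : Fin (n + 1) => ω (i : ℕ))).bind
          (fun v => P (v (Fin.last n)))
        = (L.map (fun ω => ω n)).bind ⇑P := by
      rw [claimA n]
      ext B hB
      rw [Measure.bind_apply hB (measurable_Plast P n).aemeasurable,
        Measure.bind_apply hB (Kernel.measurable P).aemeasurable,
        lintegral_map (Kernel.measurable_coe P hB) (measurable_pi_apply _)]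
    rw [hbindmap, ih]
    exact (Pit_succ P n x).symm

lemma bind_add_meas {μ₁ μ₂ : Measure S} {T : Type*} [MeasurableSpace T] {f : S → Measure T}
    (hf : Measurable f) : (μ₁ + μ₂).bind f = μ₁.bind f + μ₂.bind f := by
  ext B hB
  simp [Measure.bind_apply hB hf.aemeasurable, lintegral_add_measure]

lemma bind_mono_meas {μ₁ μ₂ : Measure S} {T : Type*} [MeasurableSpace T] {f : S → Measure T}
    (hf : Measurable f) (h : μ₁ ≤ μ₂) : μ₁.bind f ≤ μ₂.bind f := by
  refine Measure.le_iff.mpr fun B hB => ?_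
  rw [Measure.bind_apply hB hf.aemeasurable, Measure.bind_apply hB hf.aemeasurable]
  exact lintegral_mono' h le_rfl

lemma bind_invariant_iter (P : Kernel S S) [IsMarkovKernel P] {μ : Measure S}
    (hμ : μ.bind ⇑P = μ) (n : ℕ) : μ.bind ⇑(Pit P n) = μ := by
  induction n with
  | zero => exact bind_id μ
  | succ n ih =>
    have h1 : μ.bind ⇑(Pit P (n + 1)) = (μ.bind ⇑(Pit P n)).bind ⇑P := by
      rw [Measure.bind_bind (Kernel.measurable _).aemeasurable (Kernel.measurable _).aemeasurable]
      exact congrArg _ (funext fun y => Pit_succ P n y)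
    rw [h1, ih, hμ]

lemma hit_eq_iUnion {A : Set S} :
    {ω : ℕ → S | hitTime A ω < ⊤} = ⋃ n : ℕ, {ω : ℕ → S | ω (n + 1) ∈ A} := by
  ext ω
  simp only [Set.mem_setOf_eq, Set.mem_iUnion]
  constructor
  · intro h
    by_contra hc
    push_neg at hc
    have hempty : {k : ℕ | 1 ≤ k ∧ ω k ∈ A} = ∅ := by
      ext k
      simp only [Set.mem_setOf_eq, Set.mem_empty_iff_false, iff_false, not_and]
      intro hk1 hkA
      obtain ⟨j, rfl⟩ : ∃ j, k = j + 1 := ⟨k - 1, by omega⟩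
      exact hc j hkA
    rw [hitTime, hempty, Set.image_empty, sInf_empty] at h
    exact lt_irrefl _ h
  · rintro ⟨n, hn⟩
    have hmem : ((n + 1 : ℕ) : ℕ∞) ∈ (fun k : ℕ => (k : ℕ∞)) '' {k : ℕ | 1 ≤ k ∧ ω k ∈ A} :=
      ⟨n + 1, ⟨by omega, hn⟩, rfl⟩
    refine lt_of_le_of_lt (sInf_le hmem) ?_
    exact lt_top_iff_ne_top.mpr (by exact_mod_cast WithTop.coe_ne_top)

lemma sum_pit_ge_one (P : Kernel S S) [IsMarkovKernel P] {A : Set S} (hA : MeasurableSet A)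
    {x : S} {L : Measure (ℕ → S)} (hL : IsMarkovPath P (Measure.dirac x) L)
    (hhit : L {ω | hitTime A ω < ⊤} = 1) :
    1 ≤ ∑' n : ℕ, Pit P (n + 1) x A := by
  have hle : L {ω | hitTime A ω < ⊤} ≤ ∑' n : ℕ, L {ω : ℕ → S | ω (n + 1) ∈ A} := by
    rw [hit_eq_iUnion]
    exact measure_iUnion_le _
  rw [hhit] at hle
  refine le_trans hle (le_of_eq (tsum_congr fun n => ?_))
  have hm := marginal P hL (n + 1)
  rw [← hm, Measure.map_apply (measurable_pi_apply _) hA]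
  rfl

lemma green_top (P : Kernel S S) [IsMarkovKernel P] {A : Set S} (hA : MeasurableSet A)
    (hone : ∀ y : S, 1 ≤ ∑' n : ℕ, Pit P (n + 1) y A) (x : S) :
    ∑' n : ℕ, Pit P (n + 1) x A = ∞ := by
  by_contra hne
  have htail : ∀ k : ℕ, 1 ≤ ∑' n : ℕ, Pit P (n + k + 1) x A := by
    intro k
    have hrw : ∀ n : ℕ, Pit P (n + k + 1) x A = ∫⁻ y, Pit P (n + 1) y A ∂(Pit P k x) := by
      intro n
      have e : n + k + 1 = (n + 1) + k := by omega
      rw [e, Pit_add P (n + 1) k x, Measure.bind_apply hA (Kernel.measurable _).aemeasurable]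
    calc (1 : ℝ≥0∞) = ∫⁻ _, 1 ∂(Pit P k x) := by simp
    _ ≤ ∫⁻ y, ∑' n : ℕ, Pit P (n + 1) y A ∂(Pit P k x) := lintegral_mono fun y => hone y
    _ = ∑' n : ℕ, ∫⁻ y, Pit P (n + 1) y A ∂(Pit P k x) :=
        lintegral_tsum fun n => (Kernel.measurable_coe _ hA).aemeasurable
    _ = ∑' n : ℕ, Pit P (n + k + 1) x A := tsum_congr fun n => (hrw n).symm
  have hlim := ENNReal.tendsto_sum_nat_add (fun n => Pit P (n + 1) x A) hne
  have h10 : (1 : ℝ≥0∞) ≤ 0 := by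
    refine ge_of_tendsto hlim (Filter.Eventually.of_forall fun k => ?_)
    simpa using htail k
  simp at h10

lemma pos_of_invariant (P : Kernel S S) [IsMarkovKernel P] {μ : Measure S}
    (hμ : μ.bind ⇑P = μ) (hμ0 : μ ≠ 0) {A : Set S} (hA : MeasurableSet A)
    (hG : ∀ y : S, ∑' n : ℕ, Pit P (n + 1) y A = ∞) : 0 < μ A := by
  by_contra hnot
  have hA0 : μ A = 0 := by simpa using hnot
  have hzero : ∀ n : ℕ, ∫⁻ y, Pit P (n + 1) y A ∂μ = 0 := by
    intro n
    calc ∫⁻ y, Pit P (n + 1) y A ∂μ = (μ.bind ⇑(Pit P (n + 1))) A :=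
        (Measure.bind_apply hA (Kernel.measurable _).aemeasurable).symm
    _ = μ A := by rw [bind_invariant_iter P hμ (n + 1)]
    _ = 0 := hA0
  have hae : ∀ᵐ y ∂μ, ∀ n : ℕ, Pit P (n + 1) y A = 0 := by
    rw [ae_all_iff]
    intro n
    exact (lintegral_eq_zero_iff (Kernel.measurable_coe _ hA)).mp (hzero n)
  obtain ⟨y, hy⟩ : ∃ y, ∀ n : ℕ, Pit P (n + 1) y A = 0 := by
    by_contra hc
    push_neg at hc
    have hfalse : ∀ᵐ y ∂μ, False := by
      filter_upwards [hae] with y hy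
      obtain ⟨n, hn⟩ := hc y
      exact hn (hy n)
    rw [ae_iff] at hfalse
    simp only [not_false_iff, Set.setOf_true] at hfalse
    exact hμ0 (Measure.measure_univ_eq_zero.mp hfalse)
  have h0 : ∑' n : ℕ, Pit P (n + 1) y A = 0 := by simp [hy]
  rw [hG y] at h0
  simp at h0

lemma rnDeriv_mono_of_le {α β τ : Measure S} [SigmaFinite α] [SigmaFinite β] [SigmaFinite τ]
    (hab : α ≤ β) (hbτ : β ≪ τ) : α.rnDeriv τ ≤ᵐ[τ] β.rnDeriv τ := by
  apply ae_le_of_forall_setLIntegral_le_of_sigmaFinite (Measure.measurable_rnDeriv _ _)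
  intro s hs hsfin
  rw [Measure.setLIntegral_rnDeriv ((Measure.absolutelyContinuous_of_le hab).trans hbτ),
    Measure.setLIntegral_rnDeriv hbτ]
  exact Measure.le_iff'.1 hab s

lemma invariant_of_excessive (P : Kernel S S) [IsMarkovKernel P] {ν : Measure S} [SigmaFinite ν]
    (hex : ν.bind ⇑P ≤ ν) {A : Set S} (hA : MeasurableSet A) (hAfin : ν A ≠ ∞)
    (hG : ∀ y : S, ∑' n : ℕ, Pit P (n + 1) y A = ∞) :
    ν.bind ⇑P = ν := by
  set κ := ν.bind ⇑P with hκ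
  haveI : SigmaFinite κ := Measure.sigmaFinite_of_le ν hex
  have hac : κ ≪ ν := Measure.absolutelyContinuous_of_le hex
  set g := fun y => min (κ.rnDeriv ν y) 1 with hg
  have hgmeas : Measurable g := (Measure.measurable_rnDeriv κ ν).min measurable_const
  have hgle : κ.rnDeriv ν ≤ᵐ[ν] 1 := by
    apply ae_le_of_forall_setLIntegral_le_of_sigmaFinite (Measure.measurable_rnDeriv κ ν)
    intro s hs hsfin
    simp only [Pi.one_apply]
    rw [Measure.setLIntegral_rnDeriv hac, setLIntegral_one]
    exact Measure.le_iff'.1 hex s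
  have hκd : ν.withDensity g = κ := by
    rw [← Measure.withDensity_rnDeriv_eq κ ν hac]
    apply withDensity_congr_ae
    filter_upwards [hgle] with y hy
    simpa [hg] using min_eq_left hy
  set ρ := ν.withDensity (fun y => 1 - g y) with hρdef
  have hdecomp : ν = κ + ρ := by
    rw [← hκd, hρdef, ← withDensity_add_left hgmeas]
    have : (g + fun y => 1 - g y) = fun _ => (1 : ℝ≥0∞) := by
      funext y
      have : g y ≤ 1 := min_le_right _ _
      simpa [add_comm] using tsub_add_cancel_of_le this
    rw [this]
    exact (withDensity_one (μ := ν)).symm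
  have hiter : ∀ n : ℕ, ν = ν.bind ⇑(Pit P n) + ∑ k ∈ Finset.range n, ρ.bind ⇑(Pit P k) := by
    intro n
    induction n with
    | zero =>
      simp only [Finset.range_zero, Finset.sum_empty, add_zero]
      exact (bind_id ν).symm
    | succ n ih =>
      have hstep : ν.bind ⇑(Pit P n) = ν.bind ⇑(Pit P (n + 1)) + ρ.bind ⇑(Pit P n) := by
        calc ν.bind ⇑(Pit P n) = (κ + ρ).bind ⇑(Pit P n) := by rw [← hdecomp]
        _ = κ.bind ⇑(Pit P n) + ρ.bind ⇑(Pit P n) := bind_add_meas (Kernel.measurable _)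
        _ = ν.bind ⇑(Pit P (n + 1)) + ρ.bind ⇑(Pit P n) := by
            congr 1
            rw [hκ, Measure.bind_bind (Kernel.measurable P).aemeasurable (Kernel.measurable _).aemeasurable]
            exact (congrArg _ (funext fun y => Pit_succ' P n y)).symm
      rw [Finset.sum_range_succ]
      calc ν = ν.bind ⇑(Pit P n) + ∑ k ∈ Finset.range n, ρ.bind ⇑(Pit P k) := ih
      _ = (ν.bind ⇑(Pit P (n + 1)) + ρ.bind ⇑(Pit P n))
            + ∑ k ∈ Finset.range n, ρ.bind ⇑(Pit P k) := by rw [← hstep]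
      _ = ν.bind ⇑(Pit P (n + 1))
            + (∑ k ∈ Finset.range n, ρ.bind ⇑(Pit P k) + ρ.bind ⇑(Pit P n)) := by
          rw [add_assoc, add_comm (ρ.bind _)]
  have hsumle : ∀ n : ℕ, ∑ k ∈ Finset.range n, (ρ.bind ⇑(Pit P k)) A ≤ ν A := by
    intro n
    have h1 : (∑ k ∈ Finset.range n, ρ.bind ⇑(Pit P k)) A ≤ ν A := by
      conv_rhs => rw [hiter n]
      rw [Measure.add_apply]
      exact le_add_self
    simpa [Measure.finset_sum_apply] using h1
  have hρ0 : ρ = 0 := by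
    by_contra hρne
    have hpos : 0 < ρ Set.univ := Measure.measure_univ_pos.mpr hρne
    have htop : ∑' k : ℕ, (ρ.bind ⇑(Pit P (k + 1))) A = ⊤ := by
      calc ∑' k : ℕ, (ρ.bind ⇑(Pit P (k + 1))) A
          = ∑' k : ℕ, ∫⁻ y, Pit P (k + 1) y A ∂ρ :=
            tsum_congr fun k => Measure.bind_apply hA (Kernel.measurable _).aemeasurable
      _ = ∫⁻ y, ∑' k : ℕ, Pit P (k + 1) y A ∂ρ :=
            (lintegral_tsum fun k => (Kernel.measurable_coe _ hA).aemeasurable).symm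
      _ = ∫⁻ _, ⊤ ∂ρ := lintegral_congr fun y => hG y
      _ = ⊤ := by simp [lintegral_const, ENNReal.top_mul hpos.ne']
    have hle2 : ∑' k : ℕ, (ρ.bind ⇑(Pit P (k + 1))) A ≤ ν A := by
      refine le_trans (ENNReal.tsum_comp_le_tsum_of_injective (f := fun k : ℕ => k + 1)
        (add_left_injective 1) (fun k => (ρ.bind ⇑(Pit P k)) A)) ?_
      rw [ENNReal.tsum_eq_iSup_nat]
      exact iSup_le hsumle
    rw [htop] at hle2
    exact hAfin (top_le_iff.mp hle2)
  have hfin := hdecomp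
  rw [hρ0, add_zero] at hfin
  exact hfin.symm

end HarrisAux



open HarrisAux

/-- **Harris (1956), uniqueness.** If the Markov chain with transition kernel `P` is
`m`-recurrent for a nonzero σ-finite measure `m`, then the stationary measure is unique up
to a positive constant multiplier. -/
theorem harris_uniqueness_of_stationary_measure
    {S : Type*} [MeasurableSpace S] [MeasurableSpace.CountablyGenerated S]
    (P : Kernel S S) [IsMarkovKernel P]
    (Pr : S → Measure (ℕ → S))
    (hPr : ∀ x : S, IsMarkovPath P (Measure.dirac x) (Pr x))
    (m : Measure S) [SigmaFinite m] (hm : m ≠ 0)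
    (hrec : ∀ A : Set S, MeasurableSet A → 0 < m A →
      ∀ x : S, Pr x {ω | hitTime A ω < ⊤} = 1) :
    ∀ μ₁ μ₂ : Measure S, SigmaFinite μ₁ → SigmaFinite μ₂ → μ₁ ≠ 0 → μ₂ ≠ 0 →
      (∀ B : Set S, MeasurableSet B → μ₁ B = ∫⁻ x, P x B ∂μ₁) →
      (∀ B : Set S, MeasurableSet B → μ₂ B = ∫⁻ x, P x B ∂μ₂) →
      ∃ c : ℝ≥0, 0 < c ∧ μ₁ = c • μ₂ := by
  intro μ₁ μ₂ hσ1 hσ2 h1ne h2ne hs1 hs2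
  haveI := hσ1; haveI := hσ2
  have hinv1 : μ₁.bind ⇑P = μ₁ := by
    ext B hB
    rw [Measure.bind_apply hB (Kernel.measurable P).aemeasurable]
    exact (hs1 B hB).symm
  have hinv2 : μ₂.bind ⇑P = μ₂ := by
    ext B hB
    rw [Measure.bind_apply hB (Kernel.measurable P).aemeasurable]
    exact (hs2 B hB).symm
  have hone : ∀ A : Set S, MeasurableSet A → 0 < m A →
      ∀ y : S, 1 ≤ ∑' n : ℕ, Pit P (n + 1) y A :=
    fun A hA hmA y => sum_pit_ge_one P hA (hPr y) (hrec A hA hmA y)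
  have hG : ∀ A : Set S, MeasurableSet A → 0 < m A →
      ∀ y : S, ∑' n : ℕ, Pit P (n + 1) y A = ∞ :=
    fun A hA hmA y => green_top P hA (hone A hA hmA) y
  obtain ⟨A, hA, hmA, hμ₁A⟩ : ∃ A : Set S, MeasurableSet A ∧ 0 < m A ∧ μ₁ A < ∞ := by
    by_contra hc
    push_neg at hc
    have hnull : ∀ n : ℕ, m (spanningSets m n ∩ spanningSets μ₁ n) = 0 := by
      intro n
      by_contra hn
      have hpos : 0 < m (spanningSets m n ∩ spanningSets μ₁ n) := pos_iff_ne_zero.mpr hn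
      have hfin : μ₁ (spanningSets m n ∩ spanningSets μ₁ n) < ∞ :=
        lt_of_le_of_lt (measure_mono Set.inter_subset_right) (measure_spanningSets_lt_top μ₁ n)
      exact absurd hfin (by
        have := hc (spanningSets m n ∩ spanningSets μ₁ n)
          ((measurableSet_spanningSets m n).inter (measurableSet_spanningSets μ₁ n)) hpos
        simpa using this)
    have huniv : m Set.univ = 0 := by
      have hcover : (Set.univ : Set S) = ⋃ n, spanningSets m n ∩ spanningSets μ₁ n := by
        ext x
        simp only [Set.mem_univ, true_iff, Set.mem_iUnion, Set.mem_inter_iff]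
        have h1 : x ∈ ⋃ i, spanningSets m i := by rw [iUnion_spanningSets]; trivial
        have h2 : x ∈ ⋃ i, spanningSets μ₁ i := by rw [iUnion_spanningSets]; trivial
        obtain ⟨i, hi⟩ := Set.mem_iUnion.mp h1
        obtain ⟨j, hj⟩ := Set.mem_iUnion.mp h2
        exact ⟨max i j, monotone_spanningSets m (le_max_left i j) hi,
          monotone_spanningSets μ₁ (le_max_right i j) hj⟩
      rw [hcover]
      exact le_antisymm (le_trans (measure_iUnion_le _) (by simp [hnull])) zero_le
    exact hm (Measure.measure_univ_eq_zero.mp huniv)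
  set τ := μ₁ + μ₂ with hτ
  have hle1 : μ₁ ≤ τ := Measure.le_add_right le_rfl
  have hle2 : μ₂ ≤ τ := Measure.le_add_left le_rfl
  have hac1 : μ₁ ≪ τ := Measure.absolutelyContinuous_of_le hle1
  have hac2 : μ₂ ≪ τ := Measure.absolutelyContinuous_of_le hle2
  set h₁ := μ₁.rnDeriv τ with hh₁
  set h₂ := μ₂.rnDeriv τ with hh₂
  have hm₁ : Measurable h₁ := Measure.measurable_rnDeriv _ _
  have hm₂ : Measurable h₂ := Measure.measurable_rnDeriv _ _
  have hd1 : τ.withDensity h₁ = μ₁ := Measure.withDensity_rnDeriv_eq _ _ hac1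
  have hd2 : τ.withDensity h₂ = μ₂ := Measure.withDensity_rnDeriv_eq _ _ hac2
  have hsum1 : ∀ᵐ y ∂τ, h₁ y + h₂ y = 1 := by
    have heq : τ.withDensity (h₁ + h₂) = τ.withDensity 1 := by
      rw [withDensity_add_left hm₁, hd1, hd2, withDensity_one]
    have hae := (withDensity_eq_iff_of_sigmaFinite (hm₁.add hm₂).aemeasurable
      measurable_one.aemeasurable).mp heq
    filter_upwards [hae] with y hy
    simpa using hy
  have hb1 : ∀ᵐ y ∂τ, h₁ y ≤ 1 := by
    filter_upwards [hsum1] with y hy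
    calc h₁ y ≤ h₁ y + h₂ y := le_add_right le_rfl
    _ = 1 := hy
  have hb2 : ∀ᵐ y ∂τ, h₂ y ≤ 1 := by
    filter_upwards [hsum1] with y hy
    calc h₂ y ≤ h₁ y + h₂ y := le_add_self
    _ = 1 := hy
  have hsminv : ∀ c : ℝ≥0∞, (c • μ₂).bind ⇑P = c • μ₂ := by
    intro c
    ext B hB
    rw [Measure.bind_apply hB (Kernel.measurable P).aemeasurable, lintegral_smul_measure,
      Measure.smul_apply, ← hs2 B hB]
  have hdich : ∀ s : ℝ≥0, (¬ ∀ᵐ y ∂τ, (s : ℝ≥0∞) * h₂ y ≤ h₁ y) →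
      ∀ᵐ y ∂τ, h₁ y ≤ (s : ℝ≥0∞) * h₂ y := by
    intro s hsnot
    set c : ℝ≥0∞ := (s : ℝ≥0∞) with hcdef
    set g := fun y => min (h₁ y) (c * h₂ y) with hgdef
    have hgmeas : Measurable g := hm₁.min (hm₂.const_mul c)
    set ν := τ.withDensity g with hνdef
    have hνle1 : ν ≤ μ₁ := by
      rw [← hd1]
      exact withDensity_mono (Filter.Eventually.of_forall fun y => min_le_left _ _)
    have hsmul : τ.withDensity (fun y => c * h₂ y) = c • μ₂ := by
      rw [← hd2, ← withDensity_smul c hm₂]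
      congr 1
    have hνle2 : ν ≤ c • μ₂ := by
      rw [← hsmul]
      exact withDensity_mono (Filter.Eventually.of_forall fun y => min_le_right _ _)
    haveI : SigmaFinite ν := Measure.sigmaFinite_of_le μ₁ hνle1
    have hexc : ν.bind ⇑P ≤ ν := by
      have hκ1 : ν.bind ⇑P ≤ μ₁ := by
        calc ν.bind ⇑P ≤ μ₁.bind ⇑P := bind_mono_meas (Kernel.measurable P) hνle1
        _ = μ₁ := hinv1
      have hκ2 : ν.bind ⇑P ≤ c • μ₂ := by
        calc ν.bind ⇑P ≤ (c • μ₂).bind ⇑P := bind_mono_meas (Kernel.measurable P) hνle2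
        _ = c • μ₂ := hsminv c
      haveI : SigmaFinite (ν.bind ⇑P) := Measure.sigmaFinite_of_le μ₁ hκ1
      have hκac : (ν.bind ⇑P) ≪ τ := (Measure.absolutelyContinuous_of_le hκ1).trans hac1
      have ha1 : (ν.bind ⇑P).rnDeriv τ ≤ᵐ[τ] h₁ := by
        apply ae_le_of_forall_setLIntegral_le_of_sigmaFinite (Measure.measurable_rnDeriv _ _)
        intro t ht htfin
        rw [Measure.setLIntegral_rnDeriv hκac, Measure.setLIntegral_rnDeriv hac1]
        exact Measure.le_iff'.1 hκ1 t
      have ha2 : (ν.bind ⇑P).rnDeriv τ ≤ᵐ[τ] fun y => c * h₂ y := by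
        apply ae_le_of_forall_setLIntegral_le_of_sigmaFinite (Measure.measurable_rnDeriv _ _)
        intro t ht htfin
        rw [Measure.setLIntegral_rnDeriv hκac]
        have hrhs : ∫⁻ y in t, c * h₂ y ∂τ = c * μ₂ t := by
          rw [lintegral_const_mul c hm₂, Measure.setLIntegral_rnDeriv hac2]
        rw [hrhs]
        calc (ν.bind ⇑P) t ≤ (c • μ₂) t := Measure.le_iff'.1 hκ2 t
        _ = c * μ₂ t := by rw [Measure.smul_apply, smul_eq_mul]
      calc ν.bind ⇑P = τ.withDensity ((ν.bind ⇑P).rnDeriv τ) :=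
            (Measure.withDensity_rnDeriv_eq _ _ hκac).symm
      _ ≤ τ.withDensity g := by
          apply withDensity_mono
          filter_upwards [ha1, ha2] with y hy1 hy2
          exact le_min hy1 hy2
    have hνinv : ν.bind ⇑P = ν := by
      refine invariant_of_excessive P hexc hA ?_ (hG A hA hmA)
      exact ne_of_lt (lt_of_le_of_lt (Measure.le_iff'.1 hνle1 A) hμ₁A)
    set d₁ := τ.withDensity (fun y => h₁ y - g y) with hd₁def
    set d₂ := τ.withDensity (fun y => c * h₂ y - g y) with hd₂def
    have hsplit1 : μ₁ = d₁ + ν := by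
      have hfe : ((fun y => h₁ y - g y) + g) = h₁ :=
        funext fun y => tsub_add_cancel_of_le (min_le_left _ _)
      rw [← hd1, ← hfe, withDensity_add_left (f := fun y => h₁ y - g y) (hm₁.sub hgmeas)]
    have hsplit2 : c • μ₂ = d₂ + ν := by
      have hfe : ((fun y => c * h₂ y - g y) + g) = fun y => c * h₂ y :=
        funext fun y => tsub_add_cancel_of_le (min_le_right _ _)
      rw [← hsmul, ← hfe, withDensity_add_left (f := fun y => c * h₂ y - g y) ((hm₂.const_mul c).sub hgmeas)]
    have hcancel : ∀ α β : Measure S, α + ν = β + ν → α = β := by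
      intro α β hαβ
      have h3 : ν + α = ν + β := by
        rw [add_comm ν α, add_comm ν β]; exact hαβ
      exact (Measure.add_right_inj ν α β).mp h3
    have hd₁inv : d₁.bind ⇑P = d₁ := by
      have h := congrArg (fun μ => μ.bind ⇑P) hsplit1
      rw [hinv1, bind_add_meas (Kernel.measurable P), hνinv] at h
      exact (hcancel d₁ (d₁.bind ⇑P) (hsplit1.symm.trans h)).symm
    have hd₂inv : d₂.bind ⇑P = d₂ := by
      have h := congrArg (fun μ => μ.bind ⇑P) hsplit2
      rw [hsminv c, bind_add_meas (Kernel.measurable P), hνinv] at h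
      exact (hcancel d₂ (d₂.bind ⇑P) (hsplit2.symm.trans h)).symm
    by_cases hz1 : d₁ = 0
    · have hz : (fun y => h₁ y - g y) =ᵐ[τ] 0 :=
        withDensity_eq_zero (hm₁.sub hgmeas).aemeasurable hz1
      filter_upwards [hz] with y hy
      have hle : h₁ y ≤ g y := tsub_eq_zero_iff_le.mp hy
      exact le_trans hle (min_le_right _ _)
    · by_cases hz2 : d₂ = 0
      · exfalso
        apply hsnot
        have hz : (fun y => c * h₂ y - g y) =ᵐ[τ] 0 :=
          withDensity_eq_zero ((hm₂.const_mul c).sub hgmeas).aemeasurable hz2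
        filter_upwards [hz] with y hy
        exact le_trans (tsub_eq_zero_iff_le.mp hy) (min_le_left _ _)
      · exfalso
        set D := {y | c * h₂ y < h₁ y} with hDdef
        have hDmeas : MeasurableSet D := measurableSet_lt (hm₂.const_mul c) hm₁
        have hd₁Dc : d₁ Dᶜ = 0 := by
          rw [hd₁def, withDensity_apply _ hDmeas.compl]
          have h0 : ∫⁻ y in Dᶜ, (h₁ y - g y) ∂τ = ∫⁻ y in Dᶜ, 0 ∂τ := by
            apply setLIntegral_congr_fun hDmeas.compl
            intro y hy
            have hle : h₁ y ≤ c * h₂ y := not_lt.mp hy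
            simp [hgdef, min_eq_left hle]
          rw [h0, lintegral_zero]
        have hd₂D : d₂ D = 0 := by
          rw [hd₂def, withDensity_apply _ hDmeas]
          have h0 : ∫⁻ y in D, (c * h₂ y - g y) ∂τ = ∫⁻ y in D, 0 ∂τ := by
            apply setLIntegral_congr_fun hDmeas
            intro y hy
            have hlt : c * h₂ y < h₁ y := hy
            simp [hgdef, min_eq_right hlt.le]
          rw [h0, lintegral_zero]
        have hmD : m D = 0 := by
          by_contra hmD
          have hpos := pos_of_invariant P hd₂inv hz2 hDmeas
            (hG D hDmeas (pos_iff_ne_zero.mpr hmD))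
          exact absurd hd₂D hpos.ne'
        have hmDc : m Dᶜ = 0 := by
          by_contra hmDc
          have hpos := pos_of_invariant P hd₁inv hz1 hDmeas.compl
            (hG Dᶜ hDmeas.compl (pos_iff_ne_zero.mpr hmDc))
          exact absurd hd₁Dc hpos.ne'
        have huniv : m Set.univ = 0 := by
          have hle : m Set.univ ≤ m D + m Dᶜ := by
            rw [← Set.union_compl_self D]
            exact measure_union_le _ _
          simpa [hmD, hmDc] using hle
        exact hm (Measure.measure_univ_eq_zero.mp huniv)
  set T := {s : ℝ≥0 | ∀ᵐ y ∂τ, (s : ℝ≥0∞) * h₂ y ≤ h₁ y} with hTdef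
  have hT0 : (0 : ℝ≥0) ∈ T := by
    have h00 : ∀ᵐ y ∂τ, ((0 : ℝ≥0) : ℝ≥0∞) * h₂ y ≤ h₁ y :=
      Filter.Eventually.of_forall fun y => by simp
    exact h00
  have hTdc : ∀ ⦃s t : ℝ≥0⦄, s ∈ T → t ≤ s → t ∈ T := by
    intro s t hs hts
    show ∀ᵐ y ∂τ, ((t : ℝ≥0) : ℝ≥0∞) * h₂ y ≤ h₁ y
    have hs' : ∀ᵐ y ∂τ, ((s : ℝ≥0) : ℝ≥0∞) * h₂ y ≤ h₁ y := hs
    filter_upwards [hs'] with y hy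
    exact le_trans (mul_le_mul_left (by exact_mod_cast hts) _) hy
  obtain ⟨s₀, hs₀⟩ : ∃ s₀ : ℝ≥0, s₀ ∉ T := by
    by_contra hall
    push_neg at hall
    have hnall : ∀ᵐ y ∂τ, ∀ n : ℕ, ((n : ℝ≥0) : ℝ≥0∞) * h₂ y ≤ h₁ y := by
      rw [ae_all_iff]
      exact fun n => hall (n : ℝ≥0)
    have hz : ∀ᵐ y ∂τ, h₂ y = 0 := by
      filter_upwards [hnall, hb1] with y hy hy1
      by_contra hy0
      have hsup : (⨆ n : ℕ, ((n : ℝ≥0) : ℝ≥0∞) * h₂ y) ≤ h₁ y := iSup_le fun n => hy n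
      rw [← ENNReal.iSup_mul] at hsup
      have htop : (⨆ n : ℕ, ((n : ℝ≥0) : ℝ≥0∞)) = ⊤ := by
        simpa [ENNReal.coe_natCast] using ENNReal.iSup_natCast
      rw [htop, ENNReal.top_mul hy0] at hsup
      exact absurd (le_trans hsup hy1) (by simp)
    have hμ₂0 : μ₂ = 0 := by
      rw [← hd2, withDensity_congr_ae hz]
      exact withDensity_zero
    exact h2ne hμ₂0
  have hbdd : BddAbove T := by
    refine ⟨s₀, fun t ht => ?_⟩
    by_contra hlt
    exact hs₀ (hTdc ht (le_of_not_ge hlt))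
  set c₀ : ℝ≥0 := sSup T with hc₀def
  obtain ⟨e, he_anti, he_pos, he_lim⟩ := exists_seq_strictAnti_tendsto (0 : ℝ≥0)
  have hc₀T : c₀ ∈ T := by
    rcases eq_or_ne c₀ 0 with h0 | h0
    · rw [h0]; exact hT0
    · have hun : ∀ n : ℕ, (c₀ - e n) ∈ T := by
        intro n
        rcases le_or_gt c₀ (e n) with hle | hlt
        · have h00 : c₀ - e n = 0 := tsub_eq_zero_iff_le.mpr hle
          rw [h00]; exact hT0
        · have hlt2 : c₀ - e n < c₀ := tsub_lt_self (pos_iff_ne_zero.mpr h0) (he_pos n)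
          obtain ⟨t, htT, htgt⟩ := exists_lt_of_lt_csSup ⟨0, hT0⟩ hlt2
          exact hTdc htT htgt.le
      have hae : ∀ᵐ y ∂τ, ∀ n : ℕ, ((c₀ - e n : ℝ≥0) : ℝ≥0∞) * h₂ y ≤ h₁ y := by
        rw [ae_all_iff]
        exact fun n => hun n
      show ∀ᵐ y ∂τ, ((c₀ : ℝ≥0) : ℝ≥0∞) * h₂ y ≤ h₁ y
      filter_upwards [hae, hb2] with y hy hy2
      refine ENNReal.le_of_forall_pos_le_add fun ε hε hfin => ?_
      obtain ⟨n, hn⟩ := (he_lim.eventually_lt_const hε).exists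
      calc (c₀ : ℝ≥0∞) * h₂ y ≤ ((c₀ - e n + e n : ℝ≥0) : ℝ≥0∞) * h₂ y := by
            exact mul_le_mul_left (by exact_mod_cast le_tsub_add) _
      _ = ((c₀ - e n : ℝ≥0) : ℝ≥0∞) * h₂ y + ((e n : ℝ≥0) : ℝ≥0∞) * h₂ y := by
            rw [ENNReal.coe_add, add_mul]
      _ ≤ h₁ y + ((e n : ℝ≥0) : ℝ≥0∞) * 1 := add_le_add (hy n) (mul_le_mul_right hy2 _)
      _ ≤ h₁ y + ε := by
            rw [mul_one]
            exact add_le_add_right (by exact_mod_cast hn.le) _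
  have hup : ∀ᵐ y ∂τ, h₁ y ≤ (c₀ : ℝ≥0∞) * h₂ y := by
    have hnotT : ∀ n : ℕ, (c₀ + e n) ∉ T := by
      intro n hmem
      have h' := le_csSup hbdd hmem
      exact absurd h' (not_le.mpr (lt_add_of_pos_right c₀ (he_pos n)))
    have hdall : ∀ᵐ y ∂τ, ∀ n : ℕ, h₁ y ≤ ((c₀ + e n : ℝ≥0) : ℝ≥0∞) * h₂ y := by
      rw [ae_all_iff]
      exact fun n => hdich _ (hnotT n)
    filter_upwards [hdall, hb2] with y hy hy2
    refine ENNReal.le_of_forall_pos_le_add fun ε hε hfin => ?_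
    obtain ⟨n, hn⟩ := (he_lim.eventually_lt_const hε).exists
    calc h₁ y ≤ ((c₀ + e n : ℝ≥0) : ℝ≥0∞) * h₂ y := hy n
    _ = (c₀ : ℝ≥0∞) * h₂ y + ((e n : ℝ≥0) : ℝ≥0∞) * h₂ y := by rw [ENNReal.coe_add, add_mul]
    _ ≤ (c₀ : ℝ≥0∞) * h₂ y + ε := by
        refine add_le_add_right ?_ _
        calc ((e n : ℝ≥0) : ℝ≥0∞) * h₂ y ≤ ((e n : ℝ≥0) : ℝ≥0∞) * 1 := mul_le_mul_right hy2 _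
        _ ≤ ε := by rw [mul_one]; exact_mod_cast hn.le
  have hlow : ∀ᵐ y ∂τ, (c₀ : ℝ≥0∞) * h₂ y ≤ h₁ y := hc₀T
  have heq : h₁ =ᵐ[τ] fun y => (c₀ : ℝ≥0∞) * h₂ y := by
    filter_upwards [hlow, hup] with y h1' h2'
    exact le_antisymm h2' h1'
  have hμeq : μ₁ = (c₀ : ℝ≥0∞) • μ₂ := by
    rw [← hd1, withDensity_congr_ae heq, ← hd2, ← withDensity_smul _ hm₂]
    congr 1
  have hc₀pos : 0 < c₀ := by
    rcases eq_or_ne c₀ 0 with h0 | h0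
    · exfalso
      apply h1ne
      rw [hμeq, h0]
      simp
    · exact pos_iff_ne_zero.mpr h0
  refine ⟨c₀, hc₀pos, ?_⟩
  rw [hμeq]
  ext B hB
  simp only [Measure.smul_apply, ENNReal.smul_def, smul_eq_mul]

end
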